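/- p-adic van der Corput estimate: Let P(x) = a_d x^d + ... + a₀ be a polynomial of degree d ≥ 1 with coefficients in ℚ_p and a_d ≠ 0, and let r ∈ p^ℤ. Then the sublevel set Ω = { x ∈ ℚ_p : |P(x)|_p ≤ r } has Haar measure μ(Ω) ≲_d (r/|a_d|_p)^{1/d}; indeed, Ω is covered by O_d(1) balls of radius (r/|a_d|_p)^{1/d}. -/
import Mathlib


open scoped ENNReal
open Polynomial


theorem coeff_eq_lagrange_sum {F : Type*} [Field F] [DecidableEq F] (t : Finset F) (f : F[X])
    (hdeg : f.degree < t.card) :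
    f.coeff (t.card - 1) = ∑ i ∈ t, f.eval i * ∏ j ∈ t.erase i, (i - j)⁻¹ := by
  have hinj : Set.InjOn id (↑t : Set F) := Function.injective_id.injOn
  conv_lhs => rw [Lagrange.eq_interpolate hinj hdeg]
  rw [Lagrange.interpolate_apply, Polynomial.finset_sum_coeff]
  refine Finset.sum_congr rfl fun i hi => ?_
  have hbc : (Lagrange.basis t id i).coeff (t.card - 1) = ∏ j ∈ t.erase i, (i - j)⁻¹ := by
    have hnd : (Lagrange.basis t id i).natDegree = t.card - 1 :=
      Lagrange.natDegree_basis hinj hi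
    rw [← hnd, Polynomial.coeff_natDegree]
    unfold Lagrange.basis
    rw [Polynomial.leadingCoeff_prod]
    refine Finset.prod_congr rfl fun j hj => ?_
    unfold Lagrange.basisDivisor
    rw [Polynomial.leadingCoeff_mul, Polynomial.leadingCoeff_C,
      Polynomial.leadingCoeff_X_sub_C, mul_one]
    rfl
  rw [Polynomial.coeff_C_mul, hbc]
  simp [Finset.prod_inv_distrib]

theorem sep_card_le {p : ℕ} [Fact p.Prime] {d : ℕ} (hd : 1 ≤ d)
    (P : Polynomial ℚ_[p]) (hPd : P.natDegree = d) (hP0 : P ≠ 0) (n : ℤ)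
    {R : ℝ} (hR : 0 < R) (hRd : R ^ d = (p : ℝ) ^ n / ‖P.leadingCoeff‖)
    (t : Finset ℚ_[p]) (htΩ : ∀ x ∈ t, ‖P.eval x‖ ≤ (p : ℝ) ^ n)
    (hsep : ∀ x ∈ t, ∀ y ∈ t, x ≠ y → R < ‖x - y‖) : t.card ≤ d := by
  classical
  by_contra hcard
  push_neg at hcard
  obtain ⟨s, hst, hscard⟩ := Finset.exists_subset_card_eq (n := d + 1) hcard
  have ha : 0 < ‖P.leadingCoeff‖ := norm_pos_iff.mpr (Polynomial.leadingCoeff_ne_zero.mpr hP0)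
  have hpn : (0 : ℝ) < (p : ℝ) ^ n := by
    have : (0 : ℝ) < (p : ℝ) := by exact_mod_cast (Fact.out : p.Prime).pos
    positivity
  have hdeg : P.degree < s.card := by
    rw [hscard]
    refine lt_of_le_of_lt Polynomial.degree_le_natDegree ?_
    rw [hPd]
    exact_mod_cast Nat.lt_succ_self d
  have hcoef : P.leadingCoeff = ∑ i ∈ s, P.eval i * ∏ j ∈ s.erase i, (i - j)⁻¹ := by
    have := coeff_eq_lagrange_sum s P hdeg
    rwa [hscard, Nat.add_sub_cancel, ← hPd, Polynomial.coeff_natDegree] at this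
  obtain ⟨i, hi, hle⟩ := IsUltrametricDist.exists_norm_finset_sum_le s
    (fun i => P.eval i * ∏ j ∈ s.erase i, (i - j)⁻¹)
  have hsne : s.Nonempty := Finset.card_pos.mp (by omega)
  have his : i ∈ s := hi hsne
  have hiΩ : ‖P.eval i‖ ≤ (p : ℝ) ^ n := htΩ i (hst his)
  have hprodpos : ∀ j ∈ s.erase i, 0 < ‖i - j‖ := fun j hj => by
    have hji := Finset.mem_erase.mp hj
    exact hR.trans (hsep i (hst his) j (hst hji.2) (Ne.symm hji.1))
  have hcarde : (s.erase i).card = d := by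
    rw [Finset.card_erase_of_mem his, hscard]
    omega
  have hprod : R ^ d < ∏ j ∈ s.erase i, ‖i - j‖ := by
    have := Finset.prod_lt_prod_of_nonempty (f := fun _ => R) (g := fun j => ‖i - j‖)
      (s := s.erase i) (fun j _ => hR)
      (fun j hj => by
        have hji := Finset.mem_erase.mp hj
        exact hsep i (hst his) j (hst hji.2) (Ne.symm hji.1))
      (Finset.card_pos.mp (by omega))
    rwa [Finset.prod_const, hcarde] at this
  have hppos : 0 < ∏ j ∈ s.erase i, ‖i - j‖ := Finset.prod_pos hprodpos
  have hnorm : ‖P.eval i * ∏ j ∈ s.erase i, (i - j)⁻¹‖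
      = ‖P.eval i‖ * (∏ j ∈ s.erase i, ‖i - j‖)⁻¹ := by
    rw [norm_mul, norm_prod]
    simp [Finset.prod_inv_distrib]
  have hlt : ‖P.eval i‖ * (∏ j ∈ s.erase i, ‖i - j‖)⁻¹ < ‖P.leadingCoeff‖ := by
    calc ‖P.eval i‖ * (∏ j ∈ s.erase i, ‖i - j‖)⁻¹
        ≤ (p : ℝ) ^ n * (∏ j ∈ s.erase i, ‖i - j‖)⁻¹ := by
          exact mul_le_mul_of_nonneg_right hiΩ (by positivity)
      _ < (p : ℝ) ^ n * (R ^ d)⁻¹ := by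
          apply mul_lt_mul_of_pos_left _ hpn
          exact inv_strictAnti₀ (by positivity) hprod
      _ = ‖P.leadingCoeff‖ := by
          rw [hRd]
          field_simp
  rw [← hcoef, hnorm] at hle
  exact absurd (lt_of_le_of_lt hle hlt) (lt_irrefl _)


theorem padic_ball_eq {p : ℕ} [Fact p.Prime] (c : ℚ_[p]) {R : ℝ} (hR : 0 < R) :
    ∃ k : ℤ, (p : ℝ) ^ k ≤ R ∧
      {y : ℚ_[p] | ‖y - c‖ ≤ R} = {y : ℚ_[p] | ‖y - c‖ ≤ (p : ℝ) ^ k} := by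
  have hp : (1 : ℝ) < p := by exact_mod_cast (Fact.out : p.Prime).one_lt
  refine ⟨⌊Real.logb p R⌋, ?_, ?_⟩
  · have h1 : ((⌊Real.logb p R⌋ : ℝ)) ≤ Real.logb p R := Int.floor_le _
    have := (Real.le_logb_iff_rpow_le hp hR).mp h1
    rwa [Real.rpow_intCast] at this
  · ext y
    simp only [Set.mem_setOf_eq]
    constructor
    · intro h
      rcases eq_or_ne y c with rfl | hyc
      · simp only [sub_self, norm_zero]
        positivity
      · have hz : y - c ≠ 0 := sub_ne_zero.mpr hyc
        rw [Padic.norm_eq_zpow_neg_valuation hz] at h ⊢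
        have h1 : ((-(y - c).valuation : ℤ) : ℝ) ≤ Real.logb p R := by
          rw [Real.le_logb_iff_rpow_le hp hR, Real.rpow_intCast]
          exact h
        have h2 : -(y - c).valuation ≤ ⌊Real.logb p R⌋ := Int.le_floor.mpr h1
        exact zpow_le_zpow_right₀ hp.le h2
    · intro h
      refine h.trans ?_
      have h1 : ((⌊Real.logb p R⌋ : ℝ)) ≤ Real.logb p R := Int.floor_le _
      have := (Real.le_logb_iff_rpow_le hp hR).mp h1
      rwa [Real.rpow_intCast] at this

/-- p-adic van der Corput estimate: if `P` is a polynomial of degree `d ≥ 1` over `ℚ_p`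
with nonzero leading coefficient `a_d`, `μ` is the Haar measure on `ℚ_p` normalized so
that every ball of radius `p^n` has measure `p^n` (so `μ(ℤ_p) = 1`), and `r = p^n`, then
the sublevel set `Ω = {x : |P(x)|_p ≤ r}` satisfies `μ(Ω) ≲_d (r/|a_d|_p)^{1/d}`; indeed
`Ω` is covered by `O_d(1)` balls of radius `(r/|a_d|_p)^{1/d}`. -/
theorem stmt10 (d : ℕ) (hd : 1 ≤ d) :
    ∃ (M : ℕ) (C : ℝ), 0 < C ∧
      ∀ (p : ℕ) [Fact p.Prime], ∀ [MeasurableSpace ℚ_[p]], ∀ (μ : MeasureTheory.Measure ℚ_[p]),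
        (∀ (x : ℚ_[p]) (n : ℤ),
          μ {y : ℚ_[p] | ‖y - x‖ ≤ (p : ℝ) ^ n} = ENNReal.ofReal ((p : ℝ) ^ n)) →
      ∀ (P : Polynomial ℚ_[p]), P.natDegree = d → P ≠ 0 →
      ∀ n : ℤ,
        μ {x : ℚ_[p] | ‖Polynomial.eval x P‖ ≤ (p : ℝ) ^ n} ≤
          ENNReal.ofReal (C * ((p : ℝ) ^ n / ‖P.leadingCoeff‖) ^ ((1 : ℝ) / d)) ∧
        ∃ (m : ℕ) (c : Fin m → ℚ_[p]),
          m ≤ M ∧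
          {x : ℚ_[p] | ‖Polynomial.eval x P‖ ≤ (p : ℝ) ^ n} ⊆
            ⋃ i : Fin m,
              {y : ℚ_[p] | ‖y - c i‖ ≤ ((p : ℝ) ^ n / ‖P.leadingCoeff‖) ^ ((1 : ℝ) / d)} := by
  classical
  refine ⟨d, d, by exact_mod_cast hd, ?_⟩
  intro p hp _ μ hμ P hPd hP0 n
  set Ω := {x : ℚ_[p] | ‖Polynomial.eval x P‖ ≤ (p : ℝ) ^ n} with hΩ
  set R := ((p : ℝ) ^ n / ‖P.leadingCoeff‖) ^ ((1 : ℝ) / d) with hRdef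
  have ha : 0 < ‖P.leadingCoeff‖ := norm_pos_iff.mpr (Polynomial.leadingCoeff_ne_zero.mpr hP0)
  have hppos : (0 : ℝ) < p := by exact_mod_cast (Fact.out : p.Prime).pos
  have hbase : (0 : ℝ) < (p : ℝ) ^ n / ‖P.leadingCoeff‖ := by positivity
  have hR : 0 < R := Real.rpow_pos_of_pos hbase _
  have hRd : R ^ d = (p : ℝ) ^ n / ‖P.leadingCoeff‖ := by
    rw [hRdef, ← Real.rpow_natCast _ d, ← Real.rpow_mul hbase.le]
    rw [one_div, inv_mul_cancel₀ (Nat.cast_ne_zero.mpr (by omega) : (d : ℝ) ≠ 0)]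
    exact Real.rpow_one _
  -- separated subsets of Ω
  set Q : ℕ → Prop := fun k => ∃ t : Finset ℚ_[p],
    (∀ x ∈ t, x ∈ Ω) ∧ (∀ x ∈ t, ∀ y ∈ t, x ≠ y → R < ‖x - y‖) ∧ t.card = k with hQ
  have hQ0 : Q 0 := ⟨∅, by simp, by simp, rfl⟩
  have hQle : ∀ k, Q k → k ≤ d := by
    rintro k ⟨t, h1, h2, rfl⟩
    exact sep_card_le hd P hPd hP0 n hR hRd t (fun x hx => h1 x hx) h2
  set N := Nat.findGreatest Q d with hN
  have hQN : Q N := Nat.findGreatest_spec (Nat.zero_le d) hQ0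
  obtain ⟨t, htΩ, htsep, htcard⟩ := hQN
  -- covering property
  have hcover : ∀ x ∈ Ω, ∃ c ∈ t, ‖x - c‖ ≤ R := by
    intro x hx
    by_contra hcon
    push_neg at hcon
    have hxt : x ∉ t := fun hxt => absurd (hcon x hxt) (by simp [hR.le])
    have hQ' : Q (N + 1) := by
      refine ⟨insert x t, ?_, ?_, by rw [Finset.card_insert_of_notMem hxt, htcard]⟩
      · intro y hy
        rcases Finset.mem_insert.mp hy with rfl | hy
        · exact hx
        · exact htΩ y hy
      · intro a hain b hbin hab
        rcases Finset.mem_insert.mp hain with ha1 | ha1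
        · subst ha1
          rcases Finset.mem_insert.mp hbin with hb1 | hb1
          · subst hb1; exact absurd rfl hab
          · exact hcon b hb1
        · rcases Finset.mem_insert.mp hbin with hb1 | hb1
          · subst hb1
            rw [← norm_neg, neg_sub]
            exact hcon a ha1
          · exact htsep a ha1 b hb1 hab
    exact Nat.findGreatest_is_greatest (Nat.lt_succ_self N) (hQle _ hQ') hQ'
  have hmd : t.card ≤ d := by
    rw [htcard]; exact hQle N ⟨t, htΩ, htsep, htcard⟩
  refine ⟨?_, t.card, fun i => (t.equivFin.symm i : ℚ_[p]), hmd, ?_⟩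
  · -- measure bound
    have hsub : Ω ⊆ ⋃ i : Fin t.card, {y : ℚ_[p] | ‖y - (t.equivFin.symm i : ℚ_[p])‖ ≤ R} := by
      intro x hx
      obtain ⟨c0, hc0, hle⟩ := hcover x hx
      exact Set.mem_iUnion.mpr ⟨t.equivFin ⟨c0, hc0⟩, by simpa using hle⟩
    calc μ Ω ≤ μ (⋃ i : Fin t.card, {y : ℚ_[p] | ‖y - (t.equivFin.symm i : ℚ_[p])‖ ≤ R}) :=
          MeasureTheory.measure_mono hsub
      _ ≤ ∑ i : Fin t.card, μ {y : ℚ_[p] | ‖y - (t.equivFin.symm i : ℚ_[p])‖ ≤ R} :=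
          MeasureTheory.measure_iUnion_fintype_le μ _
      _ ≤ ∑ _i : Fin t.card, ENNReal.ofReal R := by
          refine Finset.sum_le_sum fun i _ => ?_
          obtain ⟨k, hk, heq⟩ := padic_ball_eq (p := p) (t.equivFin.symm i : ℚ_[p]) hR
          rw [heq, hμ]
          exact ENNReal.ofReal_le_ofReal hk
      _ = (t.card : ℝ≥0∞) * ENNReal.ofReal R := by
          simp [Finset.sum_const, nsmul_eq_mul]
      _ ≤ (d : ℝ≥0∞) * ENNReal.ofReal R := by
          exact mul_le_mul_left (by exact_mod_cast hmd) _
      _ = ENNReal.ofReal ((d : ℝ) * R) := by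
          rw [ENNReal.ofReal_mul (by positivity), ENNReal.ofReal_natCast]
  · -- covering
    intro x hx
    obtain ⟨c0, hc0, hle⟩ := hcover x hx
    exact Set.mem_iUnion.mpr ⟨t.equivFin ⟨c0, hc0⟩, by simpa using hle⟩
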